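/- For a bounded random variable Z and α ∈ (0,1), the supremum in CVaR_α[Z] = sup_{η ∈ ℝ} { η − (1/α)·E[(η − Z)₊] } is attained at η* = VaR_α[Z] := inf{ v ∈ ℝ : P(Z ≤ v) ≥ α }. -/

import Mathlib

open MeasureTheory

/-- Lower-tail conditional value-at-risk at level `α`. -/
noncomputable def cvar {Ω : Type*} [MeasurableSpace Ω] (μ : Measure Ω) (α : ℝ)
    (Z : Ω → ℝ) : ℝ :=
  ⨆ η : ℝ, (η - (1 / α) * ∫ ω, max (η - Z ω) 0 ∂μ)

/-- The value-at-risk (lower α-quantile): `VaR_α[Z] = inf { v : P(Z ≤ v) ≥ α }`. -/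
noncomputable def valueAtRisk {Ω : Type*} [MeasurableSpace Ω] (μ : Measure Ω) (α : ℝ)
    (Z : Ω → ℝ) : ℝ :=
  sInf {v : ℝ | α ≤ (μ {ω | Z ω ≤ v}).toReal}

/-- The supremum defining `CVaR_α[Z]` is attained at `η* = VaR_α[Z]`. -/
theorem cvar_attained_at_var {Ω : Type*} [MeasurableSpace Ω] (μ : Measure Ω)
    [IsProbabilityMeasure μ] (α : ℝ) (hα : α ∈ Set.Ioo (0 : ℝ) 1)
    (Z : Ω → ℝ) (hm : Measurable Z) (hb : ∃ C, ∀ ω, |Z ω| ≤ C) :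
    cvar μ α Z =
      valueAtRisk μ α Z -
        (1 / α) * ∫ ω, max (valueAtRisk μ α Z - Z ω) 0 ∂μ := by
  obtain ⟨hα0, hα1⟩ := hα
  obtain ⟨C, hC⟩ := hb
  set S : Set ℝ := {v : ℝ | α ≤ (μ {ω | Z ω ≤ v}).toReal} with hS
  set η₀ : ℝ := valueAtRisk μ α Z with hη₀def
  have hη₀S : η₀ = sInf S := rfl
  -- S is nonempty
  have hCS : C ∈ S := by
    have huniv : {ω | Z ω ≤ C} = Set.univ := by
      ext ω; simp only [Set.mem_setOf_eq, Set.mem_univ, iff_true]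
      exact le_trans (le_abs_self _) (hC ω)
    simp only [hS, Set.mem_setOf_eq, huniv, measure_univ, ENNReal.toReal_one]
    exact hα1.le
  have hSne : S.Nonempty := ⟨C, hCS⟩
  -- S is bounded below
  have hSbdd : BddBelow S := by
    refine ⟨-C, fun v hv => ?_⟩
    by_contra hvC
    push_neg at hvC
    have hempty : {ω | Z ω ≤ v} = ∅ := by
      ext ω
      simp only [Set.mem_setOf_eq, Set.mem_empty_iff_false, iff_false, not_le]
      have h := abs_le.mp (hC ω)
      linarith [h.1]
    simp only [hS, Set.mem_setOf_eq, hempty, measure_empty, ENNReal.toReal_zero] at hv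
    linarith
  -- measurability of sublevel sets
  have hmeas_le : ∀ v : ℝ, MeasurableSet {ω | Z ω ≤ v} := fun v =>
    hm measurableSet_Iic
  have hmeas_lt : ∀ v : ℝ, MeasurableSet {ω | Z ω < v} := fun v =>
    hm measurableSet_Iio
  -- integrability of positive parts
  have hint : ∀ η : ℝ, Integrable (fun ω => max (η - Z ω) 0) μ := by
    intro η
    refine Integrable.mono' (integrable_const (|η| + C)) ?_ ?_
    · exact ((measurable_const.sub hm).max measurable_const).aestronglyMeasurable
    · refine Filter.Eventually.of_forall fun ω => ?_
      have h1 : (0:ℝ) ≤ max (η - Z ω) 0 := le_max_right _ _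
      rw [Real.norm_eq_abs, abs_of_nonneg h1]
      have habs := abs_le.mp (hC ω)
      have h2 : η - Z ω ≤ |η| + C := by linarith [le_abs_self η, habs.1]
      have h0 : (0:ℝ) ≤ |η| + C := by
        have := (abs_nonneg (Z ω)).trans (hC ω)
        linarith [abs_nonneg η]
      exact max_le h2 h0
  -- P(Z < η₀) ≤ α
  have hPlt : (μ {ω | Z ω < η₀}).toReal ≤ α := by
    have hunion : {ω | Z ω < η₀} = ⋃ n : ℕ, {ω | Z ω ≤ η₀ - 1 / (n + 1)} := by
      ext ω
      simp only [Set.mem_setOf_eq, Set.mem_iUnion]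
      constructor
      · intro h
        obtain ⟨n, hn⟩ := exists_nat_one_div_lt (sub_pos.mpr h)
        exact ⟨n, by linarith⟩
      · rintro ⟨n, hn⟩
        have : (0:ℝ) < 1 / (n + 1) := by positivity
        linarith
    have hmono : Monotone (fun n : ℕ => {ω | Z ω ≤ η₀ - 1 / (n + 1)}) := by
      intro a b hab ω hω
      simp only [Set.mem_setOf_eq] at hω ⊢
      have hcast : (a:ℝ) ≤ (b:ℝ) := Nat.cast_le.mpr hab
      have : (1:ℝ) / (b + 1) ≤ 1 / (a + 1) := by
        apply one_div_le_one_div_of_le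
        · positivity
        · linarith
      linarith
    have hsup : μ {ω | Z ω < η₀} = ⨆ n : ℕ, μ {ω | Z ω ≤ η₀ - 1 / (n + 1)} := by
      rw [hunion]; exact Directed.measure_iUnion hmono.directed_le
    have hle : μ {ω | Z ω < η₀} ≤ ENNReal.ofReal α := by
      rw [hsup]
      refine iSup_le fun n => ?_
      have hnotin : η₀ - 1 / (n + 1) ∉ S := by
        intro hin
        have := csInf_le hSbdd hin
        rw [← hη₀S] at this
        have hpos : (0:ℝ) < 1 / (n + 1) := by positivity
        linarith
      simp only [hS, Set.mem_setOf_eq, not_le] at hnotin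
      have hfin : μ {ω | Z ω ≤ η₀ - 1 / (n + 1)} ≠ ⊤ := measure_ne_top _ _
      rw [← ENNReal.ofReal_toReal hfin]
      exact ENNReal.ofReal_le_ofReal hnotin.le
    calc (μ {ω | Z ω < η₀}).toReal ≤ (ENNReal.ofReal α).toReal :=
          ENNReal.toReal_mono ENNReal.ofReal_ne_top hle
      _ = α := ENNReal.toReal_ofReal hα0.le
  -- α ≤ P(Z ≤ η₀)
  have hPle : α ≤ (μ {ω | Z ω ≤ η₀}).toReal := by
    have hinter : {ω | Z ω ≤ η₀} = ⋂ n : ℕ, {ω | Z ω ≤ η₀ + 1 / (n + 1)} := by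
      ext ω
      simp only [Set.mem_setOf_eq, Set.mem_iInter]
      constructor
      · intro h n
        have : (0:ℝ) < 1 / (n + 1) := by positivity
        linarith
      · intro h
        by_contra hlt
        push_neg at hlt
        obtain ⟨n, hn⟩ := exists_nat_one_div_lt (sub_pos.mpr hlt)
        have := h n
        linarith
    have hanti : Antitone (fun n : ℕ => {ω | Z ω ≤ η₀ + 1 / (n + 1)}) := by
      intro a b hab ω hω
      simp only [Set.mem_setOf_eq] at hω ⊢
      have hcast : (a:ℝ) ≤ (b:ℝ) := Nat.cast_le.mpr hab
      have : (1:ℝ) / (b + 1) ≤ 1 / (a + 1) := by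
        apply one_div_le_one_div_of_le
        · positivity
        · linarith
      linarith
    have hinf : μ {ω | Z ω ≤ η₀} = ⨅ n : ℕ, μ {ω | Z ω ≤ η₀ + 1 / (n + 1)} := by
      rw [hinter]
      exact Directed.measure_iInter (fun n => (hmeas_le _).nullMeasurableSet)
        hanti.directed_ge ⟨0, measure_ne_top _ _⟩
    have hge : ENNReal.ofReal α ≤ μ {ω | Z ω ≤ η₀} := by
      rw [hinf]
      refine le_iInf fun n => ?_
      have hlt : sInf S < η₀ + 1 / (n + 1) := by
        rw [← hη₀S]
        have : (0:ℝ) < 1 / (n + 1) := by positivity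
        linarith
      obtain ⟨v, hvS, hvlt⟩ := exists_lt_of_csInf_lt hSne hlt
      have hsub : {ω | Z ω ≤ v} ⊆ {ω | Z ω ≤ η₀ + 1 / (n + 1)} := by
        intro ω hω
        simp only [Set.mem_setOf_eq] at hω ⊢
        linarith
      refine le_trans ?_ (measure_mono hsub)
      exact ENNReal.ofReal_le_of_le_toReal hvS
    calc α = (ENNReal.ofReal α).toReal := (ENNReal.toReal_ofReal hα0.le).symm
      _ ≤ (μ {ω | Z ω ≤ η₀}).toReal :=
          ENNReal.toReal_mono (measure_ne_top _ _) hge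
  -- the key inequality
  have key : ∀ η : ℝ, η - (1 / α) * ∫ ω, max (η - Z ω) 0 ∂μ ≤
      η₀ - (1 / α) * ∫ ω, max (η₀ - Z ω) 0 ∂μ := by
    intro η
    rcases le_total η η₀ with hle | hle
    · -- η ≤ η₀ : show I η₀ - I η ≤ α * (η₀ - η)
      have hptwise : ∀ ω, max (η₀ - Z ω) 0 - max (η - Z ω) 0 ≤
          Set.indicator {ω | Z ω < η₀} (fun _ => η₀ - η) ω := by
        intro ω
        by_cases hω : ω ∈ {ω | Z ω < η₀}
        · rw [Set.indicator_of_mem hω]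
          have hω : Z ω < η₀ := hω
          have h1 : max (η₀ - Z ω) 0 = η₀ - Z ω := max_eq_left (by linarith)
          have h2 : η - Z ω ≤ max (η - Z ω) 0 := le_max_left _ _
          linarith
        · rw [Set.indicator_of_notMem hω]
          have hω : ¬ Z ω < η₀ := hω
          push_neg at hω
          have h1 : max (η₀ - Z ω) 0 = 0 := max_eq_right (by linarith)
          have h2 : (0:ℝ) ≤ max (η - Z ω) 0 := le_max_right _ _
          linarith
      have hintind : Integrable (Set.indicator {ω | Z ω < η₀} (fun _ => η₀ - η)) μ :=
        (integrable_const (η₀ - η)).indicator (hmeas_lt η₀)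
      have hIdiff : (∫ ω, max (η₀ - Z ω) 0 ∂μ) - (∫ ω, max (η - Z ω) 0 ∂μ) =
          ∫ ω, (max (η₀ - Z ω) 0 - max (η - Z ω) 0) ∂μ :=
        (integral_sub (hint η₀) (hint η)).symm
      have hmono : ∫ ω, (max (η₀ - Z ω) 0 - max (η - Z ω) 0) ∂μ ≤
          ∫ ω, Set.indicator {ω | Z ω < η₀} (fun _ => η₀ - η) ω ∂μ :=
        integral_mono ((hint η₀).sub (hint η)) hintind hptwise
      have hindval : ∫ ω, Set.indicator {ω | Z ω < η₀} (fun _ => η₀ - η) ω ∂μ =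
          (μ {ω | Z ω < η₀}).toReal * (η₀ - η) := by
        rw [integral_indicator_const (η₀ - η) (hmeas_lt η₀)]; simp [smul_eq_mul, measureReal_def]
      have hkey : (∫ ω, max (η₀ - Z ω) 0 ∂μ) - (∫ ω, max (η - Z ω) 0 ∂μ) ≤
          α * (η₀ - η) := by
        rw [hIdiff]
        refine le_trans hmono ?_
        rw [hindval]
        exact mul_le_mul_of_nonneg_right hPlt (by linarith)
      have hcalc : (1 / α) * ((∫ ω, max (η₀ - Z ω) 0 ∂μ) - ∫ ω, max (η - Z ω) 0 ∂μ)
          ≤ η₀ - η := by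
        have := mul_le_mul_of_nonneg_left hkey (le_of_lt (by positivity : (0:ℝ) < 1/α))
        calc (1 / α) * ((∫ ω, max (η₀ - Z ω) 0 ∂μ) - ∫ ω, max (η - Z ω) 0 ∂μ)
            ≤ (1 / α) * (α * (η₀ - η)) := this
          _ = η₀ - η := by field_simp
      linarith [mul_sub (1/α) (∫ ω, max (η₀ - Z ω) 0 ∂μ) (∫ ω, max (η - Z ω) 0 ∂μ)]
    · -- η₀ ≤ η : show α * (η - η₀) ≤ I η - I η₀
      have hptwise : ∀ ω, Set.indicator {ω | Z ω ≤ η₀} (fun _ => η - η₀) ω ≤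
          max (η - Z ω) 0 - max (η₀ - Z ω) 0 := by
        intro ω
        by_cases hω : ω ∈ {ω | Z ω ≤ η₀}
        · rw [Set.indicator_of_mem hω]
          have hω : Z ω ≤ η₀ := hω
          have h1 : max (η₀ - Z ω) 0 = η₀ - Z ω := max_eq_left (by linarith)
          have h2 : max (η - Z ω) 0 = η - Z ω := max_eq_left (by linarith)
          linarith
        · rw [Set.indicator_of_notMem hω]
          have hω : ¬ Z ω ≤ η₀ := hω
          push_neg at hω
          have h1 : max (η₀ - Z ω) 0 = 0 := max_eq_right (by linarith)
          have h2 : (0:ℝ) ≤ max (η - Z ω) 0 := le_max_right _ _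
          linarith
      have hintind : Integrable (Set.indicator {ω | Z ω ≤ η₀} (fun _ => η - η₀)) μ :=
        (integrable_const (η - η₀)).indicator (hmeas_le η₀)
      have hIdiff : (∫ ω, max (η - Z ω) 0 ∂μ) - (∫ ω, max (η₀ - Z ω) 0 ∂μ) =
          ∫ ω, (max (η - Z ω) 0 - max (η₀ - Z ω) 0) ∂μ :=
        (integral_sub (hint η) (hint η₀)).symm
      have hmono : ∫ ω, Set.indicator {ω | Z ω ≤ η₀} (fun _ => η - η₀) ω ∂μ ≤
          ∫ ω, (max (η - Z ω) 0 - max (η₀ - Z ω) 0) ∂μ :=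
        integral_mono hintind ((hint η).sub (hint η₀)) hptwise
      have hindval : ∫ ω, Set.indicator {ω | Z ω ≤ η₀} (fun _ => η - η₀) ω ∂μ =
          (μ {ω | Z ω ≤ η₀}).toReal * (η - η₀) := by
        rw [integral_indicator_const (η - η₀) (hmeas_le η₀)]; simp [smul_eq_mul, measureReal_def]
      have hkey : α * (η - η₀) ≤
          (∫ ω, max (η - Z ω) 0 ∂μ) - (∫ ω, max (η₀ - Z ω) 0 ∂μ) := by
        rw [hIdiff]
        refine le_trans ?_ hmono
        rw [hindval]
        exact mul_le_mul_of_nonneg_right hPle (by linarith)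
      have hcalc : η - η₀ ≤
          (1 / α) * ((∫ ω, max (η - Z ω) 0 ∂μ) - ∫ ω, max (η₀ - Z ω) 0 ∂μ) := by
        have := mul_le_mul_of_nonneg_left hkey (le_of_lt (by positivity : (0:ℝ) < 1/α))
        calc η - η₀ = (1 / α) * (α * (η - η₀)) := by field_simp
          _ ≤ (1 / α) * ((∫ ω, max (η - Z ω) 0 ∂μ) - ∫ ω, max (η₀ - Z ω) 0 ∂μ) := this
      linarith [mul_sub (1/α) (∫ ω, max (η - Z ω) 0 ∂μ) (∫ ω, max (η₀ - Z ω) 0 ∂μ)]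
  -- conclude
  unfold cvar
  apply le_antisymm
  · exact ciSup_le key
  · exact le_ciSup ⟨η₀ - (1 / α) * ∫ ω, max (η₀ - Z ω) 0 ∂μ,
      Set.forall_mem_range.mpr key⟩ η₀
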